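/- For every prime p > 3, ∑_{(a,b) ∈ 𝔽_p²} ( ∑_{x ∈ 𝔽_p} ((x³ − ax + b)/p) )² = p³ − p², where (·/p) denotes the Legendre symbol. Consequently, with ℓ_p and α(p,k) as below, α(p, 1) = 0 and α(p, 2) = 1 + O(1/p). -/

import Mathlib

open Finset

lemma sum_range_zmod {M : Type*} [AddCommMonoid M] (p : ℕ) [NeZero p] (f : ZMod p → M) :
    ∑ i ∈ Finset.range p, f (i : ZMod p) = ∑ x : ZMod p, f x := by
  refine Finset.sum_nbij' (fun i => ((i : ℕ) : ZMod p)) (fun x => x.val) ?_ ?_ ?_ ?_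
    (fun a _ => rfl)
  · intro a _; exact mem_univ _
  · intro a _; simpa using ZMod.val_lt a
  · intro a ha; simp only [mem_range] at ha; exact ZMod.val_cast_of_lt ha
  · intro a _; simp [ZMod.natCast_val, ZMod.cast_id]

open Finset

variable {F : Type*} [Field F] [Fintype F] [DecidableEq F]

lemma sum_quad_sq : ∑ b : F, quadraticChar F (b * b) = (Fintype.card F : ℤ) - 1 := by
  have h0 : quadraticChar F ((0 : F) * 0) = 0 := by simp
  rw [← Finset.sum_erase (f := fun b : F => quadraticChar F (b * b)) (univ : Finset F) h0]
  calc ∑ b ∈ (univ : Finset F).erase 0, quadraticChar F (b * b)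
      = ∑ _b ∈ (univ : Finset F).erase 0, (1 : ℤ) := by
        refine Finset.sum_congr rfl fun b hb => ?_
        have hb0 : b ≠ 0 := Finset.ne_of_mem_erase hb
        rw [← sq, quadraticChar_sq_one' hb0]
    _ = (Fintype.card F : ℤ) - 1 := by
        rw [Finset.sum_const, Finset.card_erase_of_mem (mem_univ _), Finset.card_univ]
        have h1 : 1 ≤ Fintype.card F := Fintype.card_pos
        rw [nsmul_eq_mul, mul_one, Nat.cast_sub h1]
        push_cast
        ring

lemma sum_quad_shift (hF : ringChar F ≠ 2) {c : F} (hc : c ≠ 0) :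
    ∑ b : F, quadraticChar F (b * (b + c)) = -1 := by
  have h0 : quadraticChar F ((0 : F) * (0 + c)) = 0 := by simp
  rw [← Finset.sum_erase (f := fun b : F => quadraticChar F (b * (b + c))) (univ : Finset F) h0]
  have step1 : ∑ b ∈ (univ : Finset F).erase 0, quadraticChar F (b * (b + c))
      = ∑ b ∈ (univ : Finset F).erase 0, quadraticChar F (1 + c * b⁻¹) := by
    refine Finset.sum_congr rfl fun b hb => ?_
    have hb0 : b ≠ 0 := Finset.ne_of_mem_erase hb
    have h : b * (b + c) = b ^ 2 * (1 + c * b⁻¹) := by field_simp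
    rw [h, map_mul, quadraticChar_sq_one' hb0, one_mul]
  rw [step1, Finset.sum_erase_eq_sub (mem_univ (0 : F))]
  have h2 : ∑ b : F, quadraticChar F (1 + c * b⁻¹) = ∑ u : F, quadraticChar F (1 + c * u) :=
    Fintype.sum_equiv (Equiv.inv F) _ _ (fun b => rfl)
  have h3 : ∑ u : F, quadraticChar F (1 + c * u) = ∑ t : F, quadraticChar F t :=
    Fintype.sum_equiv ((Equiv.mulLeft₀ c hc).trans (Equiv.addLeft 1)) _ _ (fun u => rfl)
  rw [h2, h3, quadraticChar_sum_zero hF]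
  simp

lemma sum_quad (hF : ringChar F ≠ 2) (c : F) :
    ∑ b : F, quadraticChar F (b * (b + c)) = if c = 0 then (Fintype.card F : ℤ) - 1 else -1 := by
  split_ifs with h
  · subst h; simpa using sum_quad_sq (F := F)
  · exact sum_quad_shift hF h

lemma zmod_main (hF : ringChar F ≠ 2) :
    ∑ a : F, ∑ b : F, (∑ x : F, quadraticChar F (x ^ 3 - a * x + b)) ^ 2
      = (Fintype.card F : ℤ) ^ 3 - (Fintype.card F : ℤ) ^ 2 := by
  set χ := quadraticChar F with hχ
  set q : ℤ := (Fintype.card F : ℤ) with hq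
  have hinner : ∀ a x y : F, ∑ b : F, χ ((x ^ 3 - a * x + b) * (y ^ 3 - a * y + b)) =
      if (y ^ 3 - a * y) - (x ^ 3 - a * x) = 0 then q - 1 else -1 := by
    intro a x y
    have he : ∑ b : F, χ ((x ^ 3 - a * x + b) * (y ^ 3 - a * y + b)) =
        ∑ u : F, χ (u * (u + ((y ^ 3 - a * y) - (x ^ 3 - a * x)))) := by
      refine Fintype.sum_equiv (Equiv.addRight (x ^ 3 - a * x)) _ _ fun b => ?_
      simp only [Equiv.coe_addRight]
      congr 1
      ring
    rw [he, sum_quad hF]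
  calc ∑ a : F, ∑ b : F, (∑ x : F, χ (x ^ 3 - a * x + b)) ^ 2
      = ∑ a : F, ∑ b : F, ∑ x : F, ∑ y : F,
          χ ((x ^ 3 - a * x + b) * (y ^ 3 - a * y + b)) := by
        refine Finset.sum_congr rfl fun a _ => Finset.sum_congr rfl fun b _ => ?_
        rw [sq, Finset.sum_mul_sum]
        exact Finset.sum_congr rfl fun x _ => Finset.sum_congr rfl fun y _ => (map_mul χ _ _).symm
    _ = ∑ x : F, ∑ y : F, ∑ a : F, ∑ b : F,
          χ ((x ^ 3 - a * x + b) * (y ^ 3 - a * y + b)) := by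
        rw [show (∑ a : F, ∑ b : F, ∑ x : F, ∑ y : F,
            χ ((x ^ 3 - a * x + b) * (y ^ 3 - a * y + b)))
            = ∑ a : F, ∑ x : F, ∑ y : F, ∑ b : F,
            χ ((x ^ 3 - a * x + b) * (y ^ 3 - a * y + b)) from
          Finset.sum_congr rfl fun a _ => by
            rw [Finset.sum_comm]
            exact Finset.sum_congr rfl fun x _ => Finset.sum_comm]
        rw [Finset.sum_comm]
        exact Finset.sum_congr rfl fun x _ => Finset.sum_comm
    _ = ∑ x : F, ∑ y : F, ∑ a : F,
          (if (y ^ 3 - a * y) - (x ^ 3 - a * x) = 0 then q - 1 else -1) := by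
        exact Finset.sum_congr rfl fun x _ => Finset.sum_congr rfl fun y _ =>
          Finset.sum_congr rfl fun a _ => hinner a x y
    _ = ∑ x : F, ∑ y : F, (if x = y then q * (q - 1) else 0) := by
        refine Finset.sum_congr rfl fun x _ => Finset.sum_congr rfl fun y _ => ?_
        by_cases hxy : x = y
        · subst hxy
          rw [if_pos rfl, Finset.sum_congr rfl (fun a _ => if_pos (sub_self _)),
            Finset.sum_const, Finset.card_univ, nsmul_eq_mul, hq]
        · rw [if_neg hxy]
          have hyx : y - x ≠ 0 := sub_ne_zero.mpr (Ne.symm hxy)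
          have hcond : ∀ a : F, ((y ^ 3 - a * y) - (x ^ 3 - a * x) = 0)
              ↔ a = x ^ 2 + x * y + y ^ 2 := by
            intro a
            have : (y ^ 3 - a * y) - (x ^ 3 - a * x)
                = (y - x) * ((x ^ 2 + x * y + y ^ 2) - a) := by ring
            rw [this, mul_eq_zero, or_iff_right hyx, sub_eq_zero, eq_comm]
          have : ∀ a : F, (if (y ^ 3 - a * y) - (x ^ 3 - a * x) = 0 then q - 1 else (-1 : ℤ))
              = (if a = x ^ 2 + x * y + y ^ 2 then q else 0) - 1 := by
            intro a
            rw [if_congr (hcond a) rfl rfl]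
            split <;> ring
          rw [Finset.sum_congr rfl fun a _ => this a, Finset.sum_sub_distrib,
            Finset.sum_ite_eq' univ (x ^ 2 + x * y + y ^ 2) (fun _ => q), if_pos (mem_univ _),
            Finset.sum_const, Finset.card_univ, nsmul_eq_mul, mul_one, hq, sub_self]
    _ = ∑ x : F, q * (q - 1) := by
        refine Finset.sum_congr rfl fun x _ => ?_
        rw [Finset.sum_ite_eq univ x (fun _ => q * (q - 1)), if_pos (mem_univ _)]
    _ = q ^ 3 - q ^ 2 := by
        rw [Finset.sum_const, Finset.card_univ, nsmul_eq_mul, hq]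
        ring

section Bridge

lemma legendre_eq (p : ℕ) [Fact p.Prime] (hp : p.Prime) (a b x : ℕ) :
    @legendreSym p ⟨hp⟩ ((x : ℤ) ^ 3 - (a : ℤ) * x + (b : ℤ))
      = quadraticChar (ZMod p)
          ((x : ZMod p) ^ 3 - (a : ZMod p) * (x : ZMod p) + (b : ZMod p)) := by
  rw [legendreSym]
  congr 1
  push_cast
  ring

lemma main_int (p : ℕ) (hp : p.Prime) (h3 : 3 < p) :
    (∑ a ∈ Finset.range p, ∑ b ∈ Finset.range p,
        (∑ x ∈ Finset.range p,
          @legendreSym p ⟨hp⟩ ((x : ℤ) ^ 3 - (a : ℤ) * x + (b : ℤ))) ^ 2)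
      = (p : ℤ) ^ 3 - (p : ℤ) ^ 2 := by
  haveI : Fact p.Prime := ⟨hp⟩
  haveI : NeZero p := ⟨hp.ne_zero⟩
  have hchar : ringChar (ZMod p) ≠ 2 := by rw [ZMod.ringChar_zmod_n]; omega
  calc (∑ a ∈ Finset.range p, ∑ b ∈ Finset.range p,
        (∑ x ∈ Finset.range p,
          @legendreSym p ⟨hp⟩ ((x : ℤ) ^ 3 - (a : ℤ) * x + (b : ℤ))) ^ 2)
      = ∑ a ∈ Finset.range p, ∑ b ∈ Finset.range p,
          (∑ x : ZMod p, quadraticChar (ZMod p)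
            (x ^ 3 - (a : ZMod p) * x + (b : ZMod p))) ^ 2 := by
        refine Finset.sum_congr rfl fun a _ => Finset.sum_congr rfl fun b _ => ?_
        congr 1
        rw [Finset.sum_congr rfl fun x _ => legendre_eq p hp a b x]
        exact sum_range_zmod p
          (fun X => quadraticChar (ZMod p) (X ^ 3 - (a : ZMod p) * X + (b : ZMod p)))
    _ = ∑ a ∈ Finset.range p, ∑ B : ZMod p,
          (∑ x : ZMod p, quadraticChar (ZMod p)
            (x ^ 3 - (a : ZMod p) * x + B)) ^ 2 := by
        refine Finset.sum_congr rfl fun a _ => ?_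
        exact sum_range_zmod p (fun B =>
          (∑ x : ZMod p, quadraticChar (ZMod p) (x ^ 3 - (a : ZMod p) * x + B)) ^ 2)
    _ = ∑ A : ZMod p, ∑ B : ZMod p,
          (∑ x : ZMod p, quadraticChar (ZMod p) (x ^ 3 - A * x + B)) ^ 2 :=
        sum_range_zmod p (fun A =>
          ∑ B : ZMod p, (∑ x : ZMod p, quadraticChar (ZMod p) (x ^ 3 - A * x + B)) ^ 2)
    _ = (p : ℤ) ^ 3 - (p : ℤ) ^ 2 := by
        have h := zmod_main (F := ZMod p) hchar
        rwa [ZMod.card] at h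

lemma first_int (p : ℕ) (hp : p.Prime) (h3 : 3 < p) (a : ℕ) :
    (∑ b ∈ Finset.range p, ∑ x ∈ Finset.range p,
        @legendreSym p ⟨hp⟩ ((x : ℤ) ^ 3 - (a : ℤ) * x + (b : ℤ))) = 0 := by
  haveI : Fact p.Prime := ⟨hp⟩
  haveI : NeZero p := ⟨hp.ne_zero⟩
  have hchar : ringChar (ZMod p) ≠ 2 := by rw [ZMod.ringChar_zmod_n]; omega
  calc (∑ b ∈ Finset.range p, ∑ x ∈ Finset.range p,
        @legendreSym p ⟨hp⟩ ((x : ℤ) ^ 3 - (a : ℤ) * x + (b : ℤ)))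
      = ∑ b ∈ Finset.range p, ∑ x : ZMod p,
          quadraticChar (ZMod p) (x ^ 3 - (a : ZMod p) * x + (b : ZMod p)) := by
        refine Finset.sum_congr rfl fun b _ => ?_
        rw [Finset.sum_congr rfl fun x _ => legendre_eq p hp a b x]
        exact sum_range_zmod p
          (fun X => quadraticChar (ZMod p) (X ^ 3 - (a : ZMod p) * X + (b : ZMod p)))
    _ = ∑ B : ZMod p, ∑ x : ZMod p,
          quadraticChar (ZMod p) (x ^ 3 - (a : ZMod p) * x + B) :=
        sum_range_zmod p (fun B =>
          ∑ x : ZMod p, quadraticChar (ZMod p) (x ^ 3 - (a : ZMod p) * x + B))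
    _ = 0 := by
        rw [Finset.sum_comm]
        refine Finset.sum_eq_zero fun x _ => ?_
        have h : ∑ B : ZMod p, quadraticChar (ZMod p) (x ^ 3 - (a : ZMod p) * x + B)
            = ∑ t : ZMod p, quadraticChar (ZMod p) t :=
          Fintype.sum_equiv (Equiv.addLeft (x ^ 3 - (a : ZMod p) * x)) _ _ (fun b => rfl)
        rw [h, quadraticChar_sum_zero hchar]

end Bridge

/-- `ℓ_p(a,b) = -p^{-1/2} ∑_{x ∈ 𝔽_p} ((x³ - ax + b)/p)`. -/
noncomputable def ellp (p : ℕ) (hp : p.Prime) (a b : ℤ) : ℝ :=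
  -(p : ℝ) ^ (-(1 / 2) : ℝ) *
    ∑ x ∈ Finset.range p, (@legendreSym p ⟨hp⟩ ((x : ℤ) ^ 3 - a * x + b) : ℝ)

/-- `α(p,k) = p^{-2} ∑_{(a,b) ∈ 𝔽_p²} ℓ_p(a,b)^k`. -/
noncomputable def alphaMoment (p : ℕ) (hp : p.Prime) (k : ℕ) : ℝ :=
  ((p : ℝ) ^ 2)⁻¹ *
    ∑ a ∈ Finset.range p, ∑ b ∈ Finset.range p, ellp p hp (a : ℤ) (b : ℤ) ^ k

/-- Birch's second moment computation: for a prime `p > 3`,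
`∑_{(a,b) ∈ 𝔽_p²} (∑_{x ∈ 𝔽_p} ((x³-ax+b)/p))² = p³ - p²`; consequently
`α(p,1) = 0` and `α(p,2) = 1 + O(1/p)`. -/
theorem second_moment_legendre :
    (∀ (p : ℕ) (hp : p.Prime), 3 < p →
      ((∑ a ∈ Finset.range p, ∑ b ∈ Finset.range p,
          (∑ x ∈ Finset.range p,
            @legendreSym p ⟨hp⟩ ((x : ℤ) ^ 3 - (a : ℤ) * x + (b : ℤ))) ^ 2)
        = (p : ℤ) ^ 3 - (p : ℤ) ^ 2) ∧
      alphaMoment p hp 1 = 0) ∧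
    ∃ C : ℝ, 0 < C ∧ ∀ (p : ℕ) (hp : p.Prime), 3 < p →
      |alphaMoment p hp 2 - 1| ≤ C / p := by
  constructor
  · intro p hp h3
    refine ⟨main_int p hp h3, ?_⟩
    haveI : Fact p.Prime := ⟨hp⟩
    have h0 : ∑ a ∈ Finset.range p, ∑ b ∈ Finset.range p,
        ellp p hp (a : ℤ) (b : ℤ) ^ 1 = 0 := by
      refine Finset.sum_eq_zero fun a _ => ?_
      simp only [pow_one, ellp]
      rw [← Finset.mul_sum]
      have h1 := first_int p hp h3 a
      have h2 : ∑ b ∈ Finset.range p, ∑ x ∈ Finset.range p,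
          ((@legendreSym p ⟨hp⟩ ((x : ℤ) ^ 3 - (a : ℤ) * x + (b : ℤ)) : ℤ) : ℝ) = 0 := by
        have h3' : ((∑ b ∈ Finset.range p, ∑ x ∈ Finset.range p,
            @legendreSym p ⟨hp⟩ ((x : ℤ) ^ 3 - (a : ℤ) * x + (b : ℤ)) : ℤ) : ℝ)
            = ∑ b ∈ Finset.range p, ∑ x ∈ Finset.range p,
              ((@legendreSym p ⟨hp⟩ ((x : ℤ) ^ 3 - (a : ℤ) * x + (b : ℤ)) : ℤ) : ℝ) := by
          push_cast
          rfl
        rw [← h3', h1, Int.cast_zero]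
      rw [h2, mul_zero]
    rw [alphaMoment, h0, mul_zero]
  · refine ⟨1, one_pos, fun p hp h3 => ?_⟩
    haveI : Fact p.Prime := ⟨hp⟩
    have hp0 : (0 : ℝ) < p := by exact_mod_cast hp.pos
    have hpne : (p : ℝ) ≠ 0 := ne_of_gt hp0
    have hc2 : ((p : ℝ) ^ (-(1 / 2) : ℝ)) ^ 2 = (p : ℝ)⁻¹ := by
      rw [← Real.rpow_natCast ((p : ℝ) ^ (-(1 / 2) : ℝ)) 2, ← Real.rpow_mul hp0.le]
      norm_num
      exact Real.rpow_neg_one _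
    have hsum : ∑ a ∈ Finset.range p, ∑ b ∈ Finset.range p,
        ellp p hp (a : ℤ) (b : ℤ) ^ 2 = (p : ℝ)⁻¹ * ((p : ℝ) ^ 3 - (p : ℝ) ^ 2) := by
      have hmain := main_int p hp h3
      calc ∑ a ∈ Finset.range p, ∑ b ∈ Finset.range p, ellp p hp (a : ℤ) (b : ℤ) ^ 2
          = ∑ a ∈ Finset.range p, ∑ b ∈ Finset.range p, (p : ℝ)⁻¹ *
              (∑ x ∈ Finset.range p,
                ((@legendreSym p ⟨hp⟩ ((x : ℤ) ^ 3 - (a : ℤ) * x + (b : ℤ)) : ℤ) : ℝ)) ^ 2 := by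
            refine Finset.sum_congr rfl fun a _ => Finset.sum_congr rfl fun b _ => ?_
            rw [ellp, mul_pow, neg_sq, hc2]
        _ = (p : ℝ)⁻¹ * ∑ a ∈ Finset.range p, ∑ b ∈ Finset.range p,
              (∑ x ∈ Finset.range p,
                ((@legendreSym p ⟨hp⟩ ((x : ℤ) ^ 3 - (a : ℤ) * x + (b : ℤ)) : ℤ) : ℝ)) ^ 2 := by
            rw [Finset.mul_sum]
            exact Finset.sum_congr rfl fun a _ => (Finset.mul_sum _ _ _).symm
        _ = (p : ℝ)⁻¹ * (((∑ a ∈ Finset.range p, ∑ b ∈ Finset.range p,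
              (∑ x ∈ Finset.range p,
                @legendreSym p ⟨hp⟩ ((x : ℤ) ^ 3 - (a : ℤ) * x + (b : ℤ))) ^ 2 : ℤ)) : ℝ) := by
            congr 1
            push_cast
            rfl
        _ = (p : ℝ)⁻¹ * ((p : ℝ) ^ 3 - (p : ℝ) ^ 2) := by
            rw [hmain]
            push_cast
            ring
    rw [alphaMoment, hsum]
    have hkey : ((p : ℝ) ^ 2)⁻¹ * ((p : ℝ)⁻¹ * ((p : ℝ) ^ 3 - (p : ℝ) ^ 2)) - 1
        = -(p : ℝ)⁻¹ := by
      field_simp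
      ring
    rw [hkey, abs_neg, abs_of_pos (by positivity), one_div]
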